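/- For all integers i, k with 0 ≤ i ≤ ⌊k/2⌋, the suffix of W_k of length |W_{k-2i}| equals 2i ⊕ W_{k-2i}. -/
import Mathlib

/-- The morphism `phi` on the alphabet `ℕ`: `phi (2i) = (2i)(2i+1)` and `phi (2i+1) = (2i+2)`. -/
def phi (a : ℕ) : List ℕ := if a % 2 = 0 then [a, a + 1] else [a + 1]

/-- The finite ZWW words: `W n = phi^n(0)`, so `W 0 = 0`, `W 1 = 01`, `W 2 = 012`, `W 3 = 01223`. -/
def W (n : ℕ) : List ℕ := (fun w => w.flatMap phi)^[n] [0]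

lemma W_succ (n : ℕ) : W (n + 1) = (W n).flatMap phi := by
  simp [W, Function.iterate_succ_apply']

lemma phi_shift (a : ℕ) : phi (a + 2) = (phi a).map (· + 2) := by
  unfold phi
  have : (a + 2) % 2 = a % 2 := Nat.add_mod_right a 2
  rw [this]
  split <;> simp

lemma flatMap_shift (w : List ℕ) :
    (w.map (· + 2)).flatMap phi = (w.flatMap phi).map (· + 2) := by
  induction w with
  | nil => simp
  | cons a t ih => simp [phi_shift, ih]

lemma W_step (n : ℕ) : W (n + 2) = W (n + 1) ++ (W n).map (· + 2) := by
  induction n with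
  | zero => decide
  | succ n ih =>
    rw [show n + 1 + 2 = (n + 2) + 1 from rfl, W_succ, ih, List.flatMap_append,
      flatMap_shift, ← W_succ, ← W_succ, show n + 1 + 1 = n + 2 from rfl, ih,
      List.append_assoc]

lemma W_suffix : ∀ i k : ℕ, 2 * i ≤ k →
    ∃ u, W k = u ++ (W (k - 2 * i)).map (· + 2 * i) := by
  intro i
  induction i with
  | zero =>
    intro k _
    exact ⟨[], by simp⟩
  | succ i ih =>
    intro k hk
    have hk2 : 2 ≤ k := by omega
    obtain ⟨m, rfl⟩ : ∃ m, k = m + 2 := ⟨k - 2, by omega⟩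
    obtain ⟨u, hu⟩ := ih m (by omega)
    refine ⟨W (m + 1) ++ u.map (· + 2), ?_⟩
    have harith : m - 2 * i = m + 2 - 2 * (i + 1) := by omega
    rw [W_step, hu, harith]
    simp only [List.map_append, List.map_map, List.append_assoc]
    congr 2

/-- For `0 ≤ i ≤ ⌊k/2⌋` (i.e. `2i ≤ k`), the suffix of `W k` of length `|W (k - 2i)|`
equals `2i ⊕ W (k - 2i)`. -/
theorem zww_suffix : ∀ i k : ℕ, 2 * i ≤ k →
    (W k).drop ((W k).length - (W (k - 2 * i)).length) =
      (W (k - 2 * i)).map (· + 2 * i) := by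
  intro i k h
  obtain ⟨u, hu⟩ := W_suffix i k h
  rw [hu]
  have hl : (W (k - 2 * i)).length = ((W (k - 2 * i)).map (· + 2 * i)).length := by simp
  rw [hl, List.length_append, Nat.add_sub_cancel, List.drop_left]
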